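/- Define f(N) = −(N/8)(N² + N + N(N−1)(cos 2t)^{N−2}) + (1/4)[(N(N−1)(N−2)/2)(cos 2t)^{N−3} + N²(cos 2t)^{N−1} + 2N(N−1)cos 2t + (N(N−1)(N−2)/2)cos 2t], with t = c/N^α, 0 < α < 1/2, c > 0. Then f(N)² / (N^{6−4α} /16) → c⁴ as N → ∞. -/

import Mathlib

open Filter Real Topology

set_option maxHeartbeats 2000000 in
theorem signal_derivative_asymptotics (c α : ℝ) (hc : 0 < c)
    (hα0 : 0 < α) (hα : α < 1/2) :
    Filter.Tendsto
      (fun N : ℕ =>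
        (-((N : ℝ)/8) * ((N : ℝ)^2 + N
            + (N : ℝ) * ((N : ℝ) - 1) * (Real.cos (2*(c/(N : ℝ)^α)))^(N-2))
          + (1/4) * ((N : ℝ) * ((N : ℝ) - 1) * ((N : ℝ) - 2)/2
              * (Real.cos (2*(c/(N : ℝ)^α)))^(N-3)
            + (N : ℝ)^2 * (Real.cos (2*(c/(N : ℝ)^α)))^(N-1)
            + 2 * (N : ℝ) * ((N : ℝ) - 1) * Real.cos (2*(c/(N : ℝ)^α))
            + (N : ℝ) * ((N : ℝ) - 1) * ((N : ℝ) - 2)/2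
              * Real.cos (2*(c/(N : ℝ)^α))))^2
        / ((N : ℝ)^((6 : ℝ) - 4*α) / 16))
      Filter.atTop (nhds (c^4)) := by
  have hβ : (0:ℝ) < 1 - 2*α := by linarith
  have hxTop : Tendsto (fun N : ℕ => (N:ℝ)) atTop atTop := tendsto_natCast_atTop_atTop
  set θ : ℕ → ℝ := fun N => 2*(c/(N:ℝ)^α) with hθdef
  set C : ℕ → ℝ := fun N => Real.cos (θ N) with hCdef
  set D : ℕ → ℝ := fun N => (N:ℝ)^((3:ℝ) - 2*α) with hDdef
  set f : ℕ → ℝ := fun N =>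
        -((N : ℝ)/8) * ((N : ℝ)^2 + N
            + (N : ℝ) * ((N : ℝ) - 1) * (C N)^(N-2))
          + (1/4) * ((N : ℝ) * ((N : ℝ) - 1) * ((N : ℝ) - 2)/2
              * (C N)^(N-3)
            + (N : ℝ)^2 * (C N)^(N-1)
            + 2 * (N : ℝ) * ((N : ℝ) - 1) * (C N)
            + (N : ℝ) * ((N : ℝ) - 1) * ((N : ℝ) - 2)/2
              * (C N)) with hfdef
  have hθ0 : Tendsto θ atTop (𝓝 0) := by
    have h1 : Tendsto (fun N : ℕ => (N:ℝ)^α) atTop atTop :=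
      (tendsto_rpow_atTop hα0).comp hxTop
    have h2 : Tendsto (fun N : ℕ => c/(N:ℝ)^α) atTop (𝓝 0) :=
      Filter.Tendsto.div_atTop tendsto_const_nhds h1
    simpa [hθdef] using h2.const_mul 2
  have hθ1 : ∀ᶠ N in atTop, θ N < 1 := hθ0.eventually (gt_mem_nhds one_pos)
  have hθnn : ∀ N : ℕ, 0 ≤ θ N := by
    intro N
    have : 0 ≤ c/(N:ℝ)^α := div_nonneg hc.le (Real.rpow_nonneg (Nat.cast_nonneg N) α)
    simp only [hθdef]; linarith
  have hkey : ∀ N : ℕ, 1 ≤ N → (N:ℝ)^(2*α) * (θ N)^2 = 4*c^2 := by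
    intro N hN
    have hx : (0:ℝ) < N := by exact_mod_cast hN
    have hxa : (0:ℝ) < (N:ℝ)^α := Real.rpow_pos_of_pos hx α
    have h2a : (N:ℝ)^(2*α) = (N:ℝ)^α * (N:ℝ)^α := by
      rw [← Real.rpow_add hx]; ring_nf
    simp only [hθdef]
    rw [h2a]
    field_simp
    ring
  have he1 : ∀ N : ℕ, 1 ≤ N → (N:ℝ)^(2*α) * D N = (N:ℝ)^3 := by
    intro N hN
    have hx : (0:ℝ) < N := by exact_mod_cast hN
    simp only [hDdef]
    rw [← Real.rpow_add hx, show 2*α + ((3:ℝ) - 2*α) = (3:ℝ) by ring,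
      show (3:ℝ) = ((3:ℕ):ℝ) by norm_num, Real.rpow_natCast]
  have he2 : ∀ N : ℕ, 1 ≤ N → (N:ℝ)^(2*α-2) * D N = (N:ℝ) := by
    intro N hN
    have hx : (0:ℝ) < N := by exact_mod_cast hN
    simp only [hDdef]
    rw [← Real.rpow_add hx, show 2*α - 2 + ((3:ℝ) - 2*α) = (1:ℝ) by ring, Real.rpow_one]
  have hL2 : Tendsto (fun N : ℕ => (N:ℝ)^(2*α) * (C N - 1)) atTop (𝓝 (-(2*c^2))) := by
    have hz : Tendsto (fun N : ℕ => (N:ℝ)^(2*α)*(C N - 1) + 2*c^2) atTop (𝓝 0) := by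
      apply squeeze_zero_norm' (a := fun N : ℕ => 5*c^2/24 * (θ N)^2)
      · filter_upwards [eventually_ge_atTop 1, hθ1] with N hN h1
        have hx : (0:ℝ) < N := by exact_mod_cast hN
        have hx2a : (0:ℝ) < (N:ℝ)^(2*α) := Real.rpow_pos_of_pos hx _
        have hk := hkey N hN
        have habs : |θ N| ≤ 1 := by rw [abs_of_nonneg (hθnn N)]; exact h1.le
        have hb := Real.cos_bound habs
        rw [abs_of_nonneg (hθnn N)] at hb
        have heq : (N:ℝ)^(2*α)*(C N - 1) + 2*c^2
            = (N:ℝ)^(2*α) * (C N - (1 - (θ N)^2/2)) := by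
          linear_combination (-(1:ℝ)/2) * hk
        rw [heq, Real.norm_eq_abs, abs_mul, abs_of_pos hx2a]
        calc (N:ℝ)^(2*α) * |C N - (1 - (θ N)^2/2)|
            ≤ (N:ℝ)^(2*α) * ((θ N)^4 * (5/96)) := by
              exact mul_le_mul_of_nonneg_left hb hx2a.le
          _ = 5*c^2/24 * (θ N)^2 := by linear_combination (5*(θ N)^2/96) * hk
      · have h := (hθ0.pow 2).const_mul (5*c^2/24)
        simpa using h
    have h2 := hz.sub_const (2*c^2)
    simpa using h2
  have hc1 : Tendsto (fun N : ℕ => ((N:ℝ)^3+(N:ℝ)^2-2*(N:ℝ))/(2*(N:ℝ)^3)) atTop (𝓝 (1/2)) := by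
    have hInv : Tendsto (fun N : ℕ => ((N:ℝ))⁻¹) atTop (𝓝 0) :=
      tendsto_inv_atTop_zero.comp hxTop
    have h : Tendsto (fun N : ℕ => 1/2 + 1/2*((N:ℝ))⁻¹ - ((N:ℝ))⁻¹*((N:ℝ))⁻¹) atTop
        (𝓝 (1/2 + 1/2*0 - 0*0)) :=
      (tendsto_const_nhds.add (hInv.const_mul _)).sub (hInv.mul hInv)
    norm_num at h
    refine Tendsto.congr' ?_ h
    filter_upwards [eventually_ge_atTop 1] with N hN
    have hx : (0:ℝ) < N := by exact_mod_cast hN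
    field_simp
  have hg1 : Tendsto (fun N : ℕ => ((N:ℝ)^3+(N:ℝ)^2-2*(N:ℝ))/(2*(N:ℝ)^3)
      * ((N:ℝ)^(2*α) * (C N - 1))) atTop (𝓝 (-c^2)) := by
    have := hc1.mul hL2
    rw [show (1/2 : ℝ) * -(2*c^2) = -c^2 by ring] at this
    exact this
  have hg2 : Tendsto (fun N : ℕ => -((N:ℝ)^(2*α-2))) atTop (𝓝 0) := by
    have h := (tendsto_rpow_neg_atTop (y := 2-2*α) (by linarith)).comp hxTop
    have h2 : Tendsto (fun N : ℕ => (N:ℝ)^(2*α-2)) atTop (𝓝 0) := by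
      have heq : (fun N : ℕ => (N:ℝ)^(2*α-2)) = fun N : ℕ => (N:ℝ)^(-(2-2*α)) := by
        funext N; congr 1; ring
      rw [heq]; exact h
    simpa using h2.neg
  have hS : Tendsto (fun N : ℕ => (N:ℝ)^(2*α) * (C N)^(N-3)) atTop (𝓝 0) := by
    apply squeeze_zero_norm'
      (a := fun N : ℕ => (N:ℝ)^(2*α) * Real.exp (-(c^2/2) * (N:ℝ)^((1:ℝ)-2*α)))
    · filter_upwards [eventually_ge_atTop 6, hθ1] with N hN hθle
      have hN1 : 1 ≤ N := by omega
      have hx : (0:ℝ) < N := by exact_mod_cast hN1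
      have hx6 : (6:ℝ) ≤ N := by exact_mod_cast hN
      have hx2a : (0:ℝ) < (N:ℝ)^(2*α) := Real.rpow_pos_of_pos hx _
      have hk := hkey N hN1
      have habs : |θ N| ≤ 1 := by rw [abs_of_nonneg (hθnn N)]; exact hθle.le
      have hb := Real.cos_bound habs
      rw [abs_of_nonneg (hθnn N)] at hb
      have hC0 : 0 ≤ C N := by
        apply Real.cos_nonneg_of_mem_Icc
        constructor
        · have := Real.pi_pos; linarith [hθnn N]
        · have := Real.pi_gt_three; linarith [hθle.le]
      have hbub := (abs_le.mp hb).2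
      have hθsq1 : (θ N)^2 ≤ 1 := by nlinarith [hθnn N, hθle.le]
      have hθ4 : (θ N)^4 ≤ (θ N)^2 := by nlinarith [sq_nonneg (θ N)]
      have hC1 : C N ≤ 1 - (θ N)^2/4 := by nlinarith
      have hexp : C N ≤ Real.exp (-((θ N)^2/4)) :=
        hC1.trans (by linarith [Real.add_one_le_exp (-((θ N)^2/4))])
      have hcast : ((N-3:ℕ):ℝ) = (N:ℝ) - 3 := by
        rw [Nat.cast_sub (by omega)]; norm_num
      have hid : (N:ℝ)^((1:ℝ)-2*α) * (N:ℝ)^(2*α) = (N:ℝ) := by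
        rw [← Real.rpow_add hx, show (1:ℝ) - 2*α + 2*α = (1:ℝ) by ring, Real.rpow_one]
      have hmono : ((N:ℝ)-3) * (-((θ N)^2/4)) ≤ -(c^2/2) * (N:ℝ)^((1:ℝ)-2*α) := by
        have hL : c^2/2 * (N:ℝ)^((1:ℝ)-2*α) * (N:ℝ)^(2*α) = c^2/2 * (N:ℝ) := by
          linear_combination (c^2/2) * hid
        have hR : (((N:ℝ)-3) * ((θ N)^2/4)) * (N:ℝ)^(2*α) = ((N:ℝ)-3)*c^2 := by
          linear_combination (((N:ℝ)-3)/4) * hk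
        have hineq : c^2/2 * (N:ℝ) ≤ ((N:ℝ)-3)*c^2 := by nlinarith [sq_nonneg c]
        have h5 : c^2/2 * (N:ℝ)^((1:ℝ)-2*α) * (N:ℝ)^(2*α)
            ≤ (((N:ℝ)-3) * ((θ N)^2/4)) * (N:ℝ)^(2*α) := by
          rw [hL, hR]; exact hineq
        have h6 := le_of_mul_le_mul_right h5 hx2a
        linarith
      have hfinal : (C N)^(N-3) ≤ Real.exp (-(c^2/2) * (N:ℝ)^((1:ℝ)-2*α)) := by
        calc (C N)^(N-3) ≤ Real.exp (-((θ N)^2/4))^(N-3) := pow_le_pow_left₀ hC0 hexp _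
          _ = Real.exp (((N:ℝ)-3) * (-((θ N)^2/4))) := by
              rw [← hcast, ← Real.exp_nat_mul]
          _ ≤ Real.exp (-(c^2/2) * (N:ℝ)^((1:ℝ)-2*α)) := Real.exp_le_exp.mpr hmono
      rw [Real.norm_eq_abs, abs_of_nonneg (mul_nonneg hx2a.le (pow_nonneg hC0 _))]
      exact mul_le_mul_of_nonneg_left hfinal hx2a.le
    · have hcomp : Tendsto (fun N : ℕ => (N:ℝ)^((1:ℝ)-2*α)) atTop atTop :=
        (tendsto_rpow_atTop hβ).comp hxTop
      have hphi := (tendsto_rpow_mul_exp_neg_mul_atTop_nhds_zero (2*α/(1-2*α)) (c^2/2)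
        (by positivity)).comp hcomp
      refine Tendsto.congr' ?_ hphi
      filter_upwards [eventually_ge_atTop 1] with N hN
      have hx : (0:ℝ) < N := by exact_mod_cast hN
      simp only [Function.comp]
      congr 1
      rw [← Real.rpow_mul hx.le]
      congr 1
      field_simp
  have hg3 : Tendsto (fun N : ℕ =>
      (-((N:ℝ)^2*((N:ℝ)-1)/2) * (C N)^(N-2)
        + ((N:ℝ)*((N:ℝ)-1)*((N:ℝ)-2)/2) * (C N)^(N-3)
        + (N:ℝ)^2 * (C N)^(N-1)) / D N) atTop (𝓝 0) := by
    apply squeeze_zero_norm' (a := fun N : ℕ => 3 * ((N:ℝ)^(2*α) * (C N)^(N-3)))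
    · filter_upwards [eventually_ge_atTop 6, hθ1] with N hN hθle
      have hN1 : 1 ≤ N := by omega
      have hx : (0:ℝ) < N := by exact_mod_cast hN1
      have hx6 : (6:ℝ) ≤ N := by exact_mod_cast hN
      have hD : 0 < D N := Real.rpow_pos_of_pos hx _
      have hC0 : 0 ≤ C N := by
        apply Real.cos_nonneg_of_mem_Icc
        constructor
        · have := Real.pi_pos; linarith [hθnn N]
        · have := Real.pi_gt_three; linarith [hθle.le]
      have hCle1 : C N ≤ 1 := Real.cos_le_one _
      have hP2le : (C N)^(N-2) ≤ (C N)^(N-3) := pow_le_pow_of_le_one hC0 hCle1 (by omega)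
      have hP1le : (C N)^(N-1) ≤ (C N)^(N-3) := pow_le_pow_of_le_one hC0 hCle1 (by omega)
      have hP1nn : (0:ℝ) ≤ (C N)^(N-1) := pow_nonneg hC0 _
      have hP2nn : (0:ℝ) ≤ (C N)^(N-2) := pow_nonneg hC0 _
      have hP3nn : (0:ℝ) ≤ (C N)^(N-3) := pow_nonneg hC0 _
      have hm1 : (0:ℝ) ≤ (N:ℝ) - 1 := by linarith
      have hm2 : (0:ℝ) ≤ (N:ℝ) - 2 := by linarith
      have hc2nn : (0:ℝ) ≤ (N:ℝ)^2*((N:ℝ)-1)/2 := by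
        nlinarith [mul_nonneg (sq_nonneg (N:ℝ)) hm1]
      have hc3nn : (0:ℝ) ≤ (N:ℝ)*((N:ℝ)-1)*((N:ℝ)-2)/2 := by
        nlinarith [mul_nonneg (mul_nonneg hx.le hm1) hm2]
      have hc2ub : (N:ℝ)^2*((N:ℝ)-1)/2 ≤ (N:ℝ)^3 := by
        nlinarith [mul_nonneg (sq_nonneg (N:ℝ)) hx.le, sq_nonneg (N:ℝ)]
      have hc3ub : (N:ℝ)*((N:ℝ)-1)*((N:ℝ)-2)/2 ≤ (N:ℝ)^3 := by
        nlinarith [mul_nonneg hx.le (show (0:ℝ) ≤ (N:ℝ)^2+3*(N:ℝ)-2 by nlinarith [sq_nonneg (N:ℝ)])]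
      have hc1ub : (N:ℝ)^2 ≤ (N:ℝ)^3 := by
        nlinarith [mul_nonneg (sq_nonneg (N:ℝ)) hm1]
      have hx3P3 : (0:ℝ) ≤ (N:ℝ)^3 * (C N)^(N-3) :=
        mul_nonneg (by positivity) hP3nn
      have hBabs : |(-((N:ℝ)^2*((N:ℝ)-1)/2) * (C N)^(N-2)
          + ((N:ℝ)*((N:ℝ)-1)*((N:ℝ)-2)/2) * (C N)^(N-3)
          + (N:ℝ)^2 * (C N)^(N-1))| ≤ 3*((N:ℝ)^3 * (C N)^(N-3)) := by
        rw [abs_le]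
        constructor
        · have u1 := mul_le_mul_of_nonneg_left hP2le hc2nn
          have u2 := mul_le_mul_of_nonneg_right hc2ub hP3nn
          have u3 := mul_nonneg hc3nn hP3nn
          have u4 := mul_nonneg (sq_nonneg (N:ℝ)) hP1nn
          linarith
        · have u1 := mul_nonneg hc2nn hP2nn
          have u2 := mul_le_mul_of_nonneg_right hc3ub hP3nn
          have u3 := mul_le_mul_of_nonneg_left hP1le (sq_nonneg (N:ℝ))
          have u4 := mul_le_mul_of_nonneg_right hc1ub hP3nn
          linarith
      have h3 : 3*((N:ℝ)^3*(C N)^(N-3))/D N = 3*((N:ℝ)^(2*α)*(C N)^(N-3)) := by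
        rw [div_eq_iff hD.ne']
        linear_combination (-(3*(C N)^(N-3))) * he1 N hN1
      rw [Real.norm_eq_abs, abs_div, abs_of_pos hD, ← h3]
      exact div_le_div_of_nonneg_right hBabs hD.le
    · have h := hS.const_mul (3:ℝ)
      simpa using h
  have hMain : Tendsto (fun N : ℕ => 4 * f N / D N) atTop (𝓝 (-c^2)) := by
    have hsum := (hg1.add hg2).add hg3
    simp only [add_zero] at hsum
    refine Tendsto.congr' ?_ hsum
    filter_upwards [eventually_ge_atTop 1] with N hN1
    have hx : (0:ℝ) < N := by exact_mod_cast hN1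
    have hD : 0 < D N := Real.rpow_pos_of_pos hx _
    have hx2a : (N:ℝ)^(2*α) = (N:ℝ)^3 / D N := by
      rw [eq_div_iff hD.ne']; exact he1 N hN1
    have hx2a2 : (N:ℝ)^(2*α-2) = (N:ℝ) / D N := by
      rw [eq_div_iff hD.ne']; exact he2 N hN1
    simp only [hfdef]
    rw [hx2a, hx2a2]
    field_simp
    ring
  have hsq := hMain.pow 2
  rw [show ((-c^2:ℝ))^2 = c^4 by ring] at hsq
  refine Tendsto.congr' ?_ hsq
  filter_upwards [eventually_ge_atTop 1] with N hN1
  have hx : (0:ℝ) < N := by exact_mod_cast hN1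
  have hD : 0 < D N := Real.rpow_pos_of_pos hx _
  have hsq6 : (D N)^2 = (N:ℝ)^((6:ℝ)-4*α) := by
    simp only [hDdef]
    rw [sq, ← Real.rpow_add hx]
    congr 1
    ring
  simp only [hfdef, hCdef, hθdef, hDdef]
  rw [← hsq6]
  simp only [hDdef]
  field_simp
  ring
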